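/- In an L⁰-module E with the countable concatenation property, for any x, y ∈ E the supremum A_{x,y} = ⋁{B ∈ 𝓕 : 1_B·(x−y) = 0} in the measure algebra 𝓕 is attained, i.e., 1_{A_{x,y}}·x = 1_{A_{x,y}}·y. -/

import Mathlib

open MeasureTheory Filter

/-- `L⁰(Ω,Σ,ℙ)`: random variables modulo almost sure equality, realized as germs of
real-valued functions at the a.e. filter.  It is a commutative ring with the a.s.
pointwise order. -/
abbrev L0 {Ω : Type*} [MeasurableSpace Ω] (μ : Measure Ω) : Type _ :=
  Filter.Germ (MeasureTheory.ae μ) ℝ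

/-- The (class of the) indicator function `1_A` as an element of `L⁰`. -/
noncomputable def ind {Ω : Type*} [MeasurableSpace Ω] (μ : Measure Ω) (A : Set Ω) :
    L0 μ :=
  Filter.Germ.ofFun (A.indicator fun _ => (1 : ℝ))

/-- A countable measurable partition of `Ω` (pairwise disjoint measurable sets covering
`Ω` up to a null set). -/
def IsMPartition {Ω : Type*} [MeasurableSpace Ω] (μ : Measure Ω) (A : ℕ → Set Ω) : Prop :=
  (∀ k, MeasurableSet (A k)) ∧ Pairwise (Function.onFun Disjoint A) ∧ μ (⋃ k, A k)ᶜ = 0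

/-- The countable concatenation property of an `L⁰`-module `E`. -/
def HasCCP {Ω : Type*} [MeasurableSpace Ω] (μ : Measure Ω) (E : Type*)
    [AddCommGroup E] [Module (L0 μ) E] : Prop :=
  ∀ A : ℕ → Set Ω, IsMPartition μ A → ∀ x : ℕ → E,
    ∃! z : E, ∀ k, ind μ (A k) • z = ind μ (A k) • x k

/-- A subset of an `L⁰`-module is stable (under countable concatenations) if the
concatenation of any sequence of its elements along any countable measurable partition
again belongs to it. -/
def IsStable {Ω : Type*} [MeasurableSpace Ω] (μ : Measure Ω) {E : Type*}
    [AddCommGroup E] [Module (L0 μ) E] (S : Set E) : Prop :=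
  ∀ A : ℕ → Set Ω, IsMPartition μ A → ∀ x : ℕ → E, (∀ k, x k ∈ S) →
    ∀ z : E, (∀ k, ind μ (A k) • z = ind μ (A k) • x k) → z ∈ S


section Aux

variable {Ω : Type*} [MeasurableSpace Ω] (μ : Measure Ω)

lemma ind_mul (C D : Set Ω) : ind μ C * ind μ D = ind μ (C ∩ D) := by
  unfold ind
  rw [← Filter.Germ.coe_mul]
  congr 1
  funext ω
  by_cases hC : ω ∈ C <;> by_cases hD : ω ∈ D <;>
    simp [Set.indicator_apply, hC, hD]

lemma ind_empty : ind μ (∅ : Set Ω) = 0 := by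
  show Filter.Germ.ofFun _ = _
  rw [Set.indicator_empty]
  rfl

lemma ind_union (C D : Set Ω) :
    ind μ (C ∪ D) = ind μ C + ind μ D - ind μ (C ∩ D) := by
  unfold ind
  rw [← Filter.Germ.coe_add, ← Filter.Germ.coe_sub]
  congr 1
  funext ω
  by_cases hC : ω ∈ C <;> by_cases hD : ω ∈ D <;>
    simp [Set.indicator_apply, hC, hD]

variable {E : Type*} [AddCommGroup E] [Module (L0 μ) E]

lemma ind_smul_of_subset {D C : Set Ω} (h : D ⊆ C) {v : E}
    (hv : ind μ C • v = 0) : ind μ D • v = 0 := by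
  have h1 : ind μ D • v = (ind μ D * ind μ C) • v := by
    rw [ind_mul, Set.inter_eq_left.mpr h]
  rw [h1, mul_smul, hv, smul_zero]

lemma ind_union_smul {C D : Set Ω} {v : E}
    (hC : ind μ C • v = 0) (hD : ind μ D • v = 0) : ind μ (C ∪ D) • v = 0 := by
  have h1 : ind μ (C ∩ D) • v = 0 := ind_smul_of_subset μ Set.inter_subset_left hC
  rw [ind_union, sub_smul, add_smul, hC, hD, h1, add_zero, sub_zero]

lemma ind_iUnion_smul (hccp : HasCCP μ E) (v : E) (C : ℕ → Set Ω)
    (hm : ∀ k, MeasurableSet (C k)) (hz : ∀ k, ind μ (C k) • v = 0) :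
    ind μ (⋃ k, C k) • v = 0 := by
  set B := ⋃ k, C k with hB
  set D : ℕ → Set Ω := fun k => Nat.rec Bᶜ (fun n _ => disjointed C n) k with hDdef
  have hD0 : D 0 = Bᶜ := rfl
  have hDs : ∀ n, D (n + 1) = disjointed C n := fun n => rfl
  have hsub : ∀ n, disjointed C n ⊆ B :=
    fun n => (disjointed_subset C n).trans (Set.subset_iUnion C n)
  have hDunion : ⋃ k, D k = Set.univ := by
    apply Set.eq_univ_iff_forall.mpr
    intro ω
    by_cases hω : ω ∈ B
    · rw [hB, ← iUnion_disjointed] at hω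
      obtain ⟨n, hn⟩ := Set.mem_iUnion.mp hω
      exact Set.mem_iUnion.mpr ⟨n + 1, hn⟩
    · exact Set.mem_iUnion.mpr ⟨0, hω⟩
  have hpart : IsMPartition μ D := by
    refine ⟨?_, ?_, ?_⟩
    · intro k
      cases k with
      | zero => exact (MeasurableSet.iUnion hm).compl
      | succ n => exact MeasurableSet.disjointed hm n
    · intro i j hij
      match i, j with
      | 0, 0 => exact absurd rfl hij
      | 0, (m + 1) => exact disjoint_compl_left.mono_right (hsub m)
      | (n + 1), 0 => exact (disjoint_compl_left.mono_right (hsub n)).symm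
      | (n + 1), (m + 1) =>
          exact disjoint_disjointed C (fun h => hij (by rw [h]))
    · rw [hDunion, Set.compl_univ, measure_empty]
  obtain ⟨z, hzspec, huniq⟩ :=
    hccp D hpart (fun k => Nat.rec v (fun _ _ => 0) k)
  have hDsz : ∀ n, ind μ (D (n + 1)) • v = 0 := by
    intro n
    rw [hDs n]
    exact ind_smul_of_subset μ (disjointed_subset C n) (hz n)
  have hveq : z = v := by
    refine (huniq v ?_).symm
    intro k
    cases k with
    | zero => rfl
    | succ n =>
        show ind μ (D (n + 1)) • v = ind μ (D (n + 1)) • (0 : E)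
        rw [smul_zero, hDsz n]
  have hweq : z = v - ind μ B • v := by
    refine (huniq (v - ind μ B • v) ?_).symm
    intro k
    cases k with
    | zero =>
        show ind μ Bᶜ • (v - ind μ B • v) = ind μ Bᶜ • v
        rw [smul_sub, ← mul_smul, ind_mul, Set.compl_inter_self, ind_empty,
          zero_smul, sub_zero]
    | succ n =>
        show ind μ (D (n + 1)) • (v - ind μ B • v) = ind μ (D (n + 1)) • (0 : E)
        have h2 : ind μ (D (n + 1)) • (ind μ B • v) = 0 := by
          rw [← mul_smul, ind_mul, Set.inter_eq_left.mpr (hDs n ▸ hsub n), hDsz n]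
        rw [smul_sub, hDsz n, h2, smul_zero, sub_zero]
  have heq : v - ind μ B • v = v := (hveq.symm.trans hweq).symm
  exact sub_eq_self.mp heq

end Aux

/-- In an `L⁰`-module `E` with the countable concatenation property,
for any `x, y ∈ E` the supremum `A_{x,y} = ⋁{B ∈ 𝓕 : 1_B·(x−y) = 0}` in the measure
algebra is attained: there is a measurable set `B` with `1_B·(x−y) = 0` which dominates,
modulo null sets, every measurable `C` with `1_C·(x−y) = 0` (i.e. `B` represents the
supremum and `1_B·x = 1_B·y`). -/
theorem agreement_sup_attained {Ω : Type*} [MeasurableSpace Ω] (μ : Measure Ω)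
    [IsProbabilityMeasure μ] {E : Type*} [AddCommGroup E] [Module (L0 μ) E]
    (hccp : HasCCP μ E) (x y : E) :
    ∃ B : Set Ω, MeasurableSet B ∧ ind μ B • (x - y) = 0 ∧
      ∀ C : Set Ω, MeasurableSet C → ind μ C • (x - y) = 0 → μ (C \ B) = 0 := by
  set v := x - y with hv
  set S : Set (Set Ω) := {C | MeasurableSet C ∧ ind μ C • v = 0} with hS
  have hempty : (∅ : Set Ω) ∈ S := ⟨MeasurableSet.empty, by rw [ind_empty, zero_smul]⟩
  set T : Set ℝ := (fun C => (μ C).toReal) '' S with hT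
  have hTne : T.Nonempty := ⟨(μ ∅).toReal, ∅, hempty, rfl⟩
  have hTbdd : BddAbove T := by
    refine ⟨1, ?_⟩
    rintro r ⟨C, _, rfl⟩
    calc (μ C).toReal ≤ (1 : ENNReal).toReal :=
          ENNReal.toReal_mono ENNReal.one_ne_top prob_le_one
      _ = 1 := by simp
  set s := sSup T with hs
  have hex : ∀ n : ℕ, ∃ C ∈ S, s - 1 / (n + 1) < (μ C).toReal := by
    intro n
    have hlt : s - 1 / (n + 1) < s := by
      have : (0 : ℝ) < 1 / (n + 1) := by positivity
      linarith
    obtain ⟨r, hrT, hr⟩ := exists_lt_of_lt_csSup hTne hlt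
    obtain ⟨C, hCS, rfl⟩ := hrT
    exact ⟨C, hCS, hr⟩
  choose C hCS hClt using hex
  set B := ⋃ n, C n with hB
  have hBmeas : MeasurableSet B := MeasurableSet.iUnion fun n => (hCS n).1
  have hBzero : ind μ B • v = 0 :=
    ind_iUnion_smul μ hccp v C (fun n => (hCS n).1) (fun n => (hCS n).2)
  have hBS : B ∈ S := ⟨hBmeas, hBzero⟩
  have hBle : (μ B).toReal ≤ s := le_csSup hTbdd ⟨B, hBS, rfl⟩
  have hsle : s ≤ (μ B).toReal := by
    by_contra hcon
    push_neg at hcon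
    obtain ⟨n, hn⟩ := exists_nat_one_div_lt (sub_pos.mpr hcon)
    have h1 : (μ (C n)).toReal ≤ (μ B).toReal :=
      ENNReal.toReal_mono (measure_ne_top μ B)
        (measure_mono (Set.subset_iUnion C n))
    have := hClt n
    have hn' : (1 : ℝ) / (n + 1) < s - (μ B).toReal := hn
    linarith
  refine ⟨B, hBmeas, hBzero, ?_⟩
  intro D hDmeas hDzero
  have hUS : D ∪ B ∈ S := ⟨hDmeas.union hBmeas, ind_union_smul μ hDzero hBzero⟩
  have hUle : (μ (D ∪ B)).toReal ≤ (μ B).toReal :=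
    le_trans (le_csSup hTbdd ⟨D ∪ B, hUS, rfl⟩) hsle
  have hUle' : μ (D ∪ B) ≤ μ B :=
    (ENNReal.toReal_le_toReal (measure_ne_top μ _) (measure_ne_top μ _)).mp hUle
  have hsum : μ (D \ B) + μ B = μ (D ∪ B) := by
    rw [← measure_union Set.disjoint_sdiff_left hBmeas, Set.diff_union_self]
  have hfin : μ (D \ B) + μ B ≤ 0 + μ B := by
    rw [zero_add, hsum]; exact hUle'
  exact le_antisymm (ENNReal.le_of_add_le_add_right (measure_ne_top μ B) hfin)
    zero_le
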